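/- Let R be a commutative ring and let φ ∈ M_n(R) with φ ∈ J^#(M_n(R)) (i.e., φ^m ∈ M_n(J(R)) for some m ∈ ℕ). Then every coefficient of χ(φ) − t^n lies in J(R); in particular, tr(φ) ∈ J(R) and det(φ) ∈ J(R). -/

import Mathlib

open Polynomial

universe u

/-- The Jacobson radical of a ring: the intersection of all maximal (left) ideals. -/
def jacobsonRadical (R : Type*) [Ring R] : Ideal R := Ideal.jacobson (⊥ : Ideal R)

/-- `J^#(R) = {x ∈ R : x ^ n ∈ J(R) for some n ∈ ℕ}`. -/
def Jsharp (R : Type*) [Ring R] : Set R :=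
  {x | ∃ n : ℕ, 0 < n ∧ x ^ n ∈ jacobsonRadical R}

/-- An element `a` is strongly `J^#`-clean if `a = e + u` with `e` idempotent,
`u ∈ J^#(R)` and `e * a = a * e`. -/
def IsStronglyJsharpClean {R : Type*} [Ring R] (a : R) : Prop :=
  ∃ e : R, IsIdempotentElem e ∧ a - e ∈ Jsharp R ∧ e * a = a * e

/-- A commutative ring is projective-free if every finitely generated projective
module is free. -/
def IsProjectiveFree (R : Type u) [CommRing R] : Prop :=
  ∀ (M : Type u) [AddCommGroup M] [Module R M],
    Module.Finite R M → Module.Projective R M → Module.Free R M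

/-- `𝕁_r`: monic polynomials congruent to `(t - r) ^ deg f` modulo `J^#(R)`. -/
def Jpoly {R : Type*} [CommRing R] (r : R) : Set R[X] :=
  {f | f.Monic ∧ ∀ i, (f - (X - C r) ^ f.natDegree).coeff i ∈ Jsharp R}

lemma botJac (S : Type*) [Ring S] :
    Ideal.jacobson (⊥ : Ideal S) = TwoSidedIdeal.asIdeal ((⊥ : TwoSidedIdeal S).jacobson) := by
  rw [TwoSidedIdeal.asIdeal_jacobson]
  congr 1

lemma entry_mem {R : Type*} [CommRing R] {n : ℕ} (ψ : Matrix (Fin n) (Fin n) R)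
    (h : ψ ∈ jacobsonRadical (Matrix (Fin n) (Fin n) R)) (i j : Fin n) :
    ψ i j ∈ jacobsonRadical R := by
  rw [jacobsonRadical, botJac, TwoSidedIdeal.mem_asIdeal,
    ← TwoSidedIdeal.matrix_jacobson_bot, TwoSidedIdeal.mem_matrix] at h
  have := h i j
  rwa [← TwoSidedIdeal.mem_asIdeal, ← botJac] at this

/-- if `φ ∈ J^#(M_n(R))` over a commutative ring, then all coefficients
of `χ(φ) - t ^ n` lie in `J(R)`; in particular `tr(φ) ∈ J(R)` and `det(φ) ∈ J(R)`. -/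
theorem charpoly_coeff_mem_of_mem_Jsharp {R : Type*} [CommRing R] {n : ℕ} (hn : 0 < n)
    (φ : Matrix (Fin n) (Fin n) R) (hφ : φ ∈ Jsharp (Matrix (Fin n) (Fin n) R)) :
    (∀ i, (φ.charpoly - X ^ n).coeff i ∈ jacobsonRadical R) ∧
      φ.trace ∈ jacobsonRadical R ∧ φ.det ∈ jacobsonRadical R := by
  obtain ⟨m, hm, hmem⟩ := hφ
  set J := jacobsonRadical R with hJ
  set π := Ideal.Quotient.mk J with hπ
  have hnil : IsNilpotent (φ.map π) := by
    refine ⟨m, ?_⟩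
    have : φ.map π ^ m = (φ ^ m).map π := by
      simpa using (map_pow (π.mapMatrix) φ m).symm
    rw [this]
    ext i j
    simp only [Matrix.map_apply, Matrix.zero_apply]
    exact Ideal.Quotient.eq_zero_iff_mem.mpr (entry_mem _ hmem i j)
  have hnp : IsNilpotent ((φ.map π).charpoly - X ^ (Fintype.card (Fin n))) :=
    Matrix.isNilpotent_charpoly_sub_pow_of_isNilpotent hnil
  rw [Fintype.card_fin, Matrix.charpoly_map] at hnp
  have hcoeff : ∀ i, (φ.charpoly - X ^ n).coeff i ∈ J := by
    intro i
    have h1 : IsNilpotent (((φ.charpoly - X ^ n).map π).coeff i) := by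
      have : (φ.charpoly - X ^ n).map π = φ.charpoly.map π - X ^ n := by
        simp [Polynomial.map_sub, Polynomial.map_pow]
      rw [this]
      exact Polynomial.isNilpotent_iff.mp hnp i
    rw [Polynomial.coeff_map] at h1
    obtain ⟨k, hk⟩ := h1
    rw [← map_pow, Ideal.Quotient.eq_zero_iff_mem] at hk
    have hrad : J.IsRadical := Ideal.isRadical_jacobson ⊥
    exact hrad ⟨k, hk⟩
  refine ⟨hcoeff, ?_, ?_⟩
  · have : Nonempty (Fin n) := ⟨⟨0, hn⟩⟩
    have ht := Matrix.trace_eq_neg_charpoly_coeff φ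
    rw [Fintype.card_fin] at ht
    have h2 := hcoeff (n - 1)
    rw [Polynomial.coeff_sub, Polynomial.coeff_X_pow, if_neg (by omega)] at h2
    rw [ht]
    simpa using J.neg_mem h2
  · have hd := Matrix.det_eq_sign_charpoly_coeff φ
    rw [Fintype.card_fin] at hd
    have h2 := hcoeff 0
    rw [Polynomial.coeff_sub, Polynomial.coeff_X_pow, if_neg (by omega)] at h2
    rw [hd]
    simpa using J.mul_mem_left ((-1)^n) h2
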